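/- For every natural number n and every k with k + 1 ≤ n, the rank of the up operator U restricted to V(B(n)_k), viewed as a linear map into V(B(n)_{k+1}), equals min(C(n,k), C(n,k+1)). -/

import Mathlib

/-- `V n` is the complex vector space with basis `B(n)`, the set of all
subsets of `[n] = {1, …, n}` (modeled as `Finset (Fin n)`). -/
abbrev V (n : ℕ) : Type := Finset (Fin n) →₀ ℂ

/-- `V(B(n)_k)`: the span of the `k`-subsets of `[n]`, i.e. the elements of
`V n` supported on subsets of cardinality `k`. -/
noncomputable def rankSubmodule (n k : ℕ) : Submodule ℂ (V n) :=
  Finsupp.supported ℂ ℂ {X : Finset (Fin n) | X.card = k}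

/-- The up operator `U : V(B(n)) → V(B(n))`, defined on a basis element `X` by
`U(X) = Σ_Y Y`, the sum over all `Y ⊆ [n]` with `X ⊆ Y` and `|Y| = |X| + 1`. -/
noncomputable def upMap (n : ℕ) : V n →ₗ[ℂ] V n :=
  Finsupp.lift (V n) ℂ (Finset (Fin n)) fun X =>
    ∑ Y ∈ Finset.univ.filter (fun Y : Finset (Fin n) => X ⊆ Y ∧ Y.card = X.card + 1),
      Finsupp.single Y (1 : ℂ)

/-- `IsSJC n k h v` : `(v 0, v 1, …, v (h-1))` is a symmetric Jordan chain in
`V(B(n))`: a sequence of `h ≥ 1` nonzero homogeneous elements, `v i` of rank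
`k + i`, with `U (v i) = v (i+1)`, `U (v (h-1)) = 0`, and the symmetry condition
`r(v_1) + r(v_h) = n` (which for `h = 1` reads `2 r(v_1) = n`). -/
def IsSJC (n k h : ℕ) (v : ℕ → V n) : Prop :=
  1 ≤ h ∧
  (∀ i < h, v i ≠ 0 ∧ v i ∈ rankSubmodule n (k + i)) ∧
  (∀ i, i + 1 < h → upMap n (v i) = v (i + 1)) ∧
  upMap n (v (h - 1)) = 0 ∧
  k + (k + (h - 1)) = n

/-- The inclusion `V(B(n)) ≃ V(0) ⊆ V(B(n+1))` induced by regarding a subset of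
`[n]` as a subset of `[n+1]` not containing `n+1`. -/
noncomputable def inclMap (n : ℕ) : V n →ₗ[ℂ] V (n + 1) :=
  Finsupp.lmapDomain ℂ ℂ (fun X : Finset (Fin n) =>
    X.map ⟨Fin.castSucc, Fin.castSucc_injective n⟩)

/-- The map `R : V(0) → V(B(n+1))`, `R(v) = v̄`, induced by
`X ↦ X ∪ {n+1}` for `X ⊆ [n]` (here `V(0) ≅ V(B(n))`). -/
noncomputable def barMap (n : ℕ) : V n →ₗ[ℂ] V (n + 1) :=
  Finsupp.lmapDomain ℂ ℂ (fun X : Finset (Fin n) =>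
    insert (Fin.last n) (X.map ⟨Fin.castSucc, Fin.castSucc_injective n⟩))

open Finset Matrix ComplexOrder

section Aux

/-- count of supersets of `S` of cardinality `m`. -/
lemma count_supersets {n : ℕ} (S : Finset (Fin n)) (m : ℕ) (hS : S.card ≤ m) :
    (Finset.univ.filter (fun Z : Finset (Fin n) => S ⊆ Z ∧ Z.card = m)).card
      = (n - S.card).choose (m - S.card) := by
  have := Finset.card_powersetCard (m - S.card) Sᶜ
  rw [Finset.card_compl, Fintype.card_fin] at this
  rw [← this]
  apply Finset.card_bij (fun Z _ => Z \ S)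
  · rintro Z hZ
    simp only [mem_filter, mem_univ, true_and] at hZ
    rw [Finset.mem_powersetCard]
    exact ⟨fun x hx => by simp only [Finset.mem_sdiff] at hx; simp [hx.2],
      by rw [Finset.card_sdiff_of_subset hZ.1, hZ.2]⟩
  · rintro Z1 h1 Z2 h2 hEq
    simp only [mem_filter, mem_univ, true_and] at h1 h2
    have : Z1 \ S ∪ S = Z2 \ S ∪ S := by rw [hEq]
    rwa [Finset.sdiff_union_of_subset h1.1, Finset.sdiff_union_of_subset h2.1] at this
  · rintro W hW
    rw [Finset.mem_powersetCard] at hW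
    have hdisj : Disjoint W S := by
      refine Finset.disjoint_left.mpr fun x hx hxS => ?_
      have := hW.1 hx
      simp [hxS] at this
    refine ⟨W ∪ S, ?_, ?_⟩
    · simp only [mem_filter, mem_univ, true_and]
      refine ⟨Finset.subset_union_right, ?_⟩
      rw [Finset.card_union_of_disjoint hdisj, hW.2]
      omega
    · rw [Finset.union_sdiff_right, Finset.sdiff_eq_self_of_disjoint hdisj]

/-- index type of `k`-subsets -/
abbrev Idx (n k : ℕ) := {X : Finset (Fin n) // X.card = k}

lemma card_Idx (n k : ℕ) : Fintype.card (Idx n k) = n.choose k := by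
  rw [Fintype.card_finset_len, Fintype.card_fin]

lemma sum_indicator (n m : ℕ) (P : Finset (Fin n) → Prop) [DecidablePred P] :
    (∑ Z : Idx n m, if P Z.1 then (1:ℂ) else 0)
      = ((Finset.univ.filter (fun Z : Finset (Fin n) => P Z ∧ Z.card = m)).card : ℂ) := by
  rw [Finset.sum_boole]
  norm_cast
  apply Finset.card_bij (fun Z _ => Z.1)
  · rintro Z hZ
    simp only [Finset.mem_filter, Finset.mem_univ, true_and] at hZ ⊢
    exact ⟨hZ, Z.2⟩
  · rintro Z1 _ Z2 _ hEq; exact Subtype.ext hEq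
  · rintro W hW
    simp only [Finset.mem_filter, Finset.mem_univ, true_and] at hW
    exact ⟨⟨W, hW.2⟩, by simpa using hW.1, rfl⟩

/-- the inclusion matrix from `k`-subsets to `(k+1)`-subsets -/
def upMat (n k : ℕ) : Matrix (Idx n (k + 1)) (Idx n k) ℂ :=
  fun Y X => if X.1 ⊆ Y.1 then 1 else 0

lemma upMat_conjT_mul (n k : ℕ) (X X' : Idx n k) :
    ((upMat n k)ᴴ * upMat n k) X X'
      = ((Finset.univ.filter (fun Z : Finset (Fin n) =>
          (X.1 ∪ X'.1) ⊆ Z ∧ Z.card = k + 1)).card : ℂ) := by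
  rw [Matrix.mul_apply]
  simp only [Matrix.conjTranspose_apply, upMat]
  have : ∀ Z : Idx n (k + 1),
      star (if X.1 ⊆ Z.1 then (1:ℂ) else 0) * (if X'.1 ⊆ Z.1 then (1:ℂ) else 0)
      = if (X.1 ∪ X'.1) ⊆ Z.1 then 1 else 0 := by
    intro Z
    by_cases h1 : X.1 ⊆ Z.1 <;> by_cases h2 : X'.1 ⊆ Z.1 <;>
      simp [h1, h2, Finset.union_subset_iff]
  refine (Finset.sum_congr rfl (fun Z _ => this Z)).trans
    ((sum_indicator n (k+1) (fun Z => (X.1 ∪ X'.1) ⊆ Z)).trans ?_)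
  rfl

lemma upMat_mul_conjT (n k : ℕ) (X X' : Idx n (k + 1)) :
    (upMat n k * (upMat n k)ᴴ) X X' = (((X.1 ∩ X'.1).card.choose k : ℕ) : ℂ) := by
  rw [Matrix.mul_apply]
  simp only [Matrix.conjTranspose_apply, upMat]
  have : ∀ W : Idx n k, (if W.1 ⊆ X.1 then (1:ℂ) else 0) * star (if W.1 ⊆ X'.1 then (1:ℂ) else 0)
      = if W.1 ⊆ X.1 ∩ X'.1 then 1 else 0 := by
    intro W
    by_cases h1 : W.1 ⊆ X.1 <;> by_cases h2 : W.1 ⊆ X'.1 <;>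
      simp [h1, h2, Finset.subset_inter_iff]
  refine (Finset.sum_congr rfl (fun W _ => this W)).trans
    ((sum_indicator n k (fun W => W ⊆ X.1 ∩ X'.1)).trans ?_)
  congr 1
  have : Finset.univ.filter (fun W : Finset (Fin n) => W ⊆ X.1 ∩ X'.1 ∧ W.card = k)
      = (X.1 ∩ X'.1).powersetCard k := by
    ext W; simp [Finset.mem_powersetCard, and_comm]
  rw [this, Finset.card_powersetCard]

lemma key (n k : ℕ) :
    (upMat n (k+1))ᴴ * upMat n (k+1) + ((2*(k+1) : ℕ) : Matrix (Idx n (k+1)) (Idx n (k+1)) ℂ)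
      = upMat n k * (upMat n k)ᴴ + ((n : ℕ) : Matrix (Idx n (k+1)) (Idx n (k+1)) ℂ) := by
  ext X X'
  have hn : k + 1 ≤ n := by
    have := Finset.card_le_univ X.1
    simpa [X.2] using this
  rw [Matrix.add_apply, Matrix.add_apply, upMat_conjT_mul, upMat_mul_conjT,
    ← Matrix.diagonal_natCast, ← Matrix.diagonal_natCast, Matrix.diagonal_apply,
    Matrix.diagonal_apply]
  by_cases hXX : X = X'
  · subst hXX
    rw [if_pos rfl, if_pos rfl, Finset.union_self, Finset.inter_self, X.2,
      count_supersets X.1 (k+2) (by omega)]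
    rw [X.2]
    have h1 : (k + 2) - (k + 1) = 1 := by omega
    rw [h1, Nat.choose_one_right, Nat.choose_succ_self_right]
    rw [Nat.cast_sub hn]
    push_cast
    ring
  · rw [if_neg hXX, if_neg hXX, add_zero, add_zero]
    have hcard : k + 2 ≤ (X.1 ∪ X'.1).card := by
      have h1 : X.1 ⊆ X.1 ∪ X'.1 := Finset.subset_union_left
      have h2 : X.1.card ≤ (X.1 ∪ X'.1).card := Finset.card_le_card h1
      rcases Nat.lt_or_ge (k+1) (X.1 ∪ X'.1).card with h | h
      · omega
      · exfalso
        have hXu : X.1 = X.1 ∪ X'.1 := Finset.eq_of_subset_of_card_le h1 (by omega)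
        have : X'.1 ⊆ X.1 := by rw [hXu]; exact Finset.subset_union_right
        exact hXX (Subtype.ext (Finset.eq_of_subset_of_card_le this (by
          rw [X.2, X'.2])).symm)
    have hsum : (X.1 ∪ X'.1).card + (X.1 ∩ X'.1).card = (k+1) + (k+1) := by
      rw [Finset.card_union_add_card_inter, X.2, X'.2]
    rcases eq_or_lt_of_le hcard with h | h
    · rw [count_supersets _ _ (le_of_eq h.symm), ← h]
      have h2 : (X.1 ∩ X'.1).card = k := by omega
      rw [h2, Nat.sub_self, Nat.choose_zero_right, Nat.choose_self]
    · have h0 : (Finset.univ.filter (fun Z : Finset (Fin n) =>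
          (X.1 ∪ X'.1) ⊆ Z ∧ Z.card = k + 2)).card = 0 := by
        rw [Finset.card_eq_zero, Finset.filter_eq_empty_iff]
        rintro Z - ⟨hZ1, hZ2⟩
        have := Finset.card_le_card hZ1
        omega
      have h2 : (X.1 ∩ X'.1).card < k := by omega
      rw [h0, Nat.choose_eq_zero_of_lt h2]

lemma key0 (n : ℕ) :
    (upMat n 0)ᴴ * upMat n 0 = ((n:ℕ) : Matrix (Idx n 0) (Idx n 0) ℂ) := by
  ext X X'
  have hX : X = X' := Subtype.ext (by
    rw [Finset.card_eq_zero.mp X.2, Finset.card_eq_zero.mp X'.2])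
  subst hX
  rw [upMat_conjT_mul, ← Matrix.diagonal_natCast, Matrix.diagonal_apply_eq,
    Finset.union_self, count_supersets X.1 1 (by rw [X.2]; omega), X.2]
  simp

lemma choose_le_succ_of (n k : ℕ) (h : 2*k < n) : n.choose k ≤ n.choose (k+1) := by
  have h1 := Nat.choose_succ_right_eq n k
  have h2 : n.choose k * (k+1) ≤ n.choose k * (n - k) := by
    apply Nat.mul_le_mul_left; omega
  rw [← h1] at h2
  exact Nat.le_of_mul_le_mul_right h2 (by omega)

lemma succ_choose_le_of (n k : ℕ) (h : n ≤ 2*k) : n.choose (k+1) ≤ n.choose k := by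
  have h1 := Nat.choose_succ_right_eq n k
  have h2 : n.choose k * (n - k) ≤ n.choose k * (k+1) := by
    apply Nat.mul_le_mul_left; omega
  rw [← h1] at h2
  exact Nat.le_of_mul_le_mul_right h2 (by omega)

lemma rank_upMat (n k : ℕ) (h : k + 1 ≤ n) :
    (upMat n k).rank = min (n.choose k) (n.choose (k+1)) := by
  rcases lt_or_ge (2*k) n with hlt | hge
  · have hpos : ((upMat n k)ᴴ * upMat n k).PosDef := by
      cases k with
      | zero => rw [key0]; exact Matrix.PosDef.natCast n (by omega)
      | succ j =>
        have heq : (upMat n (j+1))ᴴ * upMat n (j+1)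
            = upMat n j * (upMat n j)ᴴ
              + ((n - 2*(j+1) : ℕ) : Matrix (Idx n (j+1)) (Idx n (j+1)) ℂ) := by
          apply add_right_cancel (b := ((2*(j+1) : ℕ) : Matrix (Idx n (j+1)) (Idx n (j+1)) ℂ))
          rw [key n j, add_assoc, ← Nat.cast_add]
          congr 2
          omega
        rw [heq]
        exact Matrix.PosDef.posSemidef_add (Matrix.posSemidef_self_mul_conjTranspose _)
          (Matrix.PosDef.natCast _ (by omega))
    rw [min_eq_left (choose_le_succ_of n k hlt),
      ← Matrix.rank_conjTranspose_mul_self, Matrix.rank_of_isUnit _ hpos.isUnit, card_Idx]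
  · have hpos : (upMat n k * (upMat n k)ᴴ).PosDef := by
      have heq : upMat n k * (upMat n k)ᴴ
          = (upMat n (k+1))ᴴ * upMat n (k+1)
            + ((2*(k+1) - n : ℕ) : Matrix (Idx n (k+1)) (Idx n (k+1)) ℂ) := by
        apply add_right_cancel (b := ((n : ℕ) : Matrix (Idx n (k+1)) (Idx n (k+1)) ℂ))
        rw [add_assoc, ← Nat.cast_add, show 2*(k+1) - n + n = 2*(k+1) by omega]
        exact (key n k).symm
      rw [heq]
      exact Matrix.PosDef.posSemidef_add (Matrix.posSemidef_conjTranspose_mul_self _)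
        (Matrix.PosDef.natCast _ (by omega))
    rw [min_eq_right (succ_choose_le_of n k hge),
      ← Matrix.rank_self_mul_conjTranspose, Matrix.rank_of_isUnit _ hpos.isUnit, card_Idx]

/-- the coordinate inclusion of the span of `k`-sets -/
noncomputable def coordJ (n k : ℕ) : (Idx n k → ℂ) →ₗ[ℂ] V n :=
  (Finsupp.lmapDomain ℂ ℂ (Subtype.val : Idx n k → Finset (Fin n))).comp
    (Finsupp.linearEquivFunOnFinite ℂ ℂ (Idx n k)).symm.toLinearMap

lemma coordJ_injective (n k : ℕ) : Function.Injective (coordJ n k) :=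
  (Finsupp.mapDomain_injective Subtype.val_injective).comp
    (Finsupp.linearEquivFunOnFinite ℂ ℂ (Idx n k)).symm.injective

lemma range_J (n k : ℕ) : LinearMap.range (coordJ n k) = rankSubmodule n k := by
  rw [coordJ, LinearMap.range_comp, LinearEquiv.range, Submodule.map_top,
    ← Submodule.map_top, ← Finsupp.supported_univ, Finsupp.lmapDomain_supported,
    Set.image_univ, Subtype.range_coe_subtype]
  rfl

lemma upMap_single (n : ℕ) (S : Finset (Fin n)) :
    upMap n (Finsupp.single S 1)
      = ∑ Y ∈ Finset.univ.filter (fun Y : Finset (Fin n) => S ⊆ Y ∧ Y.card = S.card + 1),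
          Finsupp.single Y (1 : ℂ) := by
  rw [upMap, Finsupp.lift_apply, Finsupp.sum_single_index, one_smul]
  rw [zero_smul]

lemma coordJ_apply (n k : ℕ) (f : Idx n k → ℂ) (W : Finset (Fin n)) :
    coordJ n k f W = if h : W.card = k then f ⟨W, h⟩ else 0 := by
  rw [coordJ, LinearMap.comp_apply, LinearEquiv.coe_coe, Finsupp.lmapDomain_apply]
  by_cases h : W.card = k
  · rw [dif_pos h]
    exact Finsupp.mapDomain_apply Subtype.val_injective _ ⟨W, h⟩
  · rw [dif_neg h]
    apply Finsupp.mapDomain_notin_range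
    rintro ⟨⟨W', hW'⟩, rfl⟩
    exact h hW'

lemma bridge (n k : ℕ) :
    (upMap n).comp (coordJ n k) = (coordJ n (k+1)).comp (upMat n k).mulVecLin := by
  apply Module.Basis.ext (Pi.basisFun ℂ (Idx n k))
  intro X
  rw [Pi.basisFun_apply, LinearMap.comp_apply, LinearMap.comp_apply]
  have hL : coordJ n k (Pi.single X 1) = Finsupp.single X.1 (1:ℂ) := by
    ext W
    rw [coordJ_apply, Finsupp.single_apply]
    by_cases h : W.card = k
    · rw [dif_pos h]
      by_cases hXW : X.1 = W
      · rw [if_pos hXW]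
        have : X = ⟨W, h⟩ := Subtype.ext hXW
        rw [this, Pi.single_eq_same]
      · rw [if_neg hXW, Pi.single_eq_of_ne (fun hc => hXW ((congrArg Subtype.val hc).symm))]
    · rw [dif_neg h, if_neg (fun hc => h (by rw [← hc]; exact X.2))]
  rw [hL, upMap_single, X.2]
  ext W
  rw [Finsupp.finset_sum_apply, coordJ_apply]
  have hsum : ∀ Y ∈ Finset.univ.filter
      (fun Y : Finset (Fin n) => X.1 ⊆ Y ∧ Y.card = k + 1),
      (Finsupp.single Y (1:ℂ)) W = if Y = W then 1 else 0 := fun Y _ =>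
    Finsupp.single_apply
  rw [Finset.sum_congr rfl hsum, Finset.sum_ite_eq']
  by_cases h : W.card = k + 1
  · rw [dif_pos h]
    rw [Matrix.mulVecLin_apply, Matrix.mulVec_single]
    simp only [Finset.mem_filter, Finset.mem_univ, true_and, upMat, mul_one, Pi.smul_apply,
      op_smul_eq_mul, Matrix.col_apply, one_mul]
    by_cases hXW : X.1 ⊆ W
    · rw [if_pos ⟨hXW, h⟩, if_pos hXW]
    · rw [if_neg (fun hc => hXW hc.1), if_neg hXW]
  · rw [dif_neg h, if_neg (fun hc => h (Finset.mem_filter.mp hc).2.2)]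

end Aux

/-- **Theorem.** For every `n` and every `k` with `k + 1 ≤ n`, the rank of the up
operator `U` restricted to `V(B(n)_k)`, viewed as a linear map into `V(B(n)_{k+1})`
(i.e. the dimension of the image `U(V(B(n)_k))`), equals `min(C(n,k), C(n,k+1))`. -/
theorem rank_upMap_restricted (n k : ℕ) (h : k + 1 ≤ n) :
    Module.finrank ℂ ↥((rankSubmodule n k).map (upMap n)) =
      min (n.choose k) (n.choose (k + 1)) := by
  have h1 : (rankSubmodule n k).map (upMap n)
      = LinearMap.range ((upMap n).comp (coordJ n k)) := by
    rw [LinearMap.range_comp, range_J]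
  rw [h1, bridge, LinearMap.range_comp]
  rw [← LinearEquiv.finrank_eq
    (Submodule.equivMapOfInjective _ (coordJ_injective n (k+1)) _)]
  rw [← rank_upMat n k h]
  rfl
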